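/- arXiv:1912.10409 — 2 statements merged into one kernel-verified Lean document; each statement's English description precedes it below -/
import Mathlib

section
/- Let R be an Artin algebra and n ≥ 2. Then R satisfies the Strong Nakayama Conjecture if and only if R[t]/(t^n) satisfies it; that is, for every nonzero finitely generated left R-module M there exists an integer k ≥ 0 with Ext^k_R(M,R) ≠ 0, if and only if for every nonzero finitely generated left R[t]/(t^n)-module N there exists an integer k ≥ 0 with Ext^k_{R[t]/(t^n)}(N, R[t]/(t^n)) ≠ 0. -/
noncomputable section

namespace Paper

universe u

open Polynomial

variable (R : Type u) [Ring R] (n : ℕ)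

/-- The defining relation of `R[t]/(t^n)`. -/
def truncRel (a b : Polynomial R) : Prop := a = Polynomial.X ^ n ∧ b = 0

/-- The ring `R[t]/(t^n)`: the quotient of the polynomial ring `R[t]` by the two-sided ideal
generated by `t^n`. -/
abbrev TruncPoly : Type u := RingQuot (truncRel R n)

/-- The canonical projection `R[t] → R[t]/(t^n)`. -/
def truncMk : Polynomial R →+* TruncPoly R n := RingQuot.mkRingHom _

/-- The canonical ring homomorphism `R → R[t]/(t^n)`. -/
def truncC : R →+* TruncPoly R n := (truncMk R n).comp (Polynomial.C : R →+* Polynomial R)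

/-- The image of `t` in `R[t]/(t^n)`. -/
def tgen : TruncPoly R n := truncMk R n Polynomial.X

open CategoryTheory in
variable (Λ : Type u) [Ring Λ] in
/-- There exists `k ≥ 0` with `Ext^k_Λ(M, Λ) ≠ 0`. -/
def SomeExtNonzero (M : Type u) [AddCommGroup M] [Module Λ M] : Prop :=
  ∃ k : ℕ, ¬ Limits.IsZero
    (((Ext ℤ (ModuleCat.{u} Λ) k).obj (Opposite.op (ModuleCat.of Λ M))).obj (ModuleCat.of Λ Λ))



section DevAux
lemma truncMk_surjective : Function.Surjective (truncMk R n) := RingQuot.mkRingHom_surjective _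

lemma tgen_pow_eq_zero : tgen R n ^ n = 0 := by
  have : truncMk R n (Polynomial.X ^ n) = truncMk R n 0 := RingQuot.mkRingHom_rel ⟨rfl, rfl⟩
  simpa [tgen, map_pow] using this

def low (f : Polynomial R) : Fin n → R := fun i => f.coeff i

lemma rel_low {a b : Polynomial R} (h : RingQuot.Rel (truncRel R n) a b) :
    low R n a = low R n b := by
  induction h with
  | of h => obtain ⟨rfl, rfl⟩ := h
            funext i
            simp [low, Polynomial.coeff_X_pow, (Fin.is_lt i).ne]
  | add_left _ ih => funext i; simpa [low] using congrFun ih i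
  | mul_left h ih =>
      rename_i a b c
      funext i
      simp only [low, Polynomial.coeff_mul]
      refine Finset.sum_congr rfl fun p hp => ?_
      have hlt : p.1 < n := lt_of_le_of_lt (Finset.HasAntidiagonal.antidiagonal.fst_le hp) i.is_lt
      have := congrFun ih (⟨p.1, hlt⟩ : Fin n)
      simp only [low] at this
      rw [this]
  | mul_right h ih =>
      rename_i a b c
      funext i
      simp only [low, Polynomial.coeff_mul]
      refine Finset.sum_congr rfl fun p hp => ?_
      have hlt : p.2 < n := lt_of_le_of_lt (Finset.HasAntidiagonal.antidiagonal.snd_le hp) i.is_lt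
      have := congrFun ih (⟨p.2, hlt⟩ : Fin n)
      simp only [low] at this
      rw [this]

def coeffs : TruncPoly R n → (Fin n → R) := fun x =>
  Quot.lift (low R n) (fun _ _ h => rel_low R n h) x.toQuot

lemma coeffs_mk (f : Polynomial R) : coeffs R n (truncMk R n f) = low R n f := by
  rw [truncMk, RingQuot.mkRingHom_def]; rfl

lemma coeffs_injective {x y : TruncPoly R n} (h : coeffs R n x = coeffs R n y) : x = y := by
  obtain ⟨f, rfl⟩ := truncMk_surjective R n x
  obtain ⟨g, rfl⟩ := truncMk_surjective R n y
  rw [coeffs_mk, coeffs_mk] at h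
  have hdvd : (Polynomial.X : Polynomial R) ^ n ∣ f - g := by
    rw [Polynomial.X_pow_dvd_iff]
    intro d hd
    have := congrFun h ⟨d, hd⟩
    simp only [low] at this
    simp [Polynomial.coeff_sub, this]
  obtain ⟨c, hc⟩ := hdvd
  have h0 : truncMk R n (Polynomial.X ^ n) = 0 := by
    have : truncMk R n (Polynomial.X ^ n) = truncMk R n 0 := RingQuot.mkRingHom_rel ⟨rfl, rfl⟩
    simpa using this
  have : truncMk R n (f - g) = 0 := by rw [hc, map_mul, h0, zero_mul]
  rw [map_sub, sub_eq_zero] at this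
  exact this

-- NEW PART ------------------------------------------------------------

/-- build an element of `R[t]/(t^n)` from its coefficients -/
def lamOf (v : Fin n → R) : TruncPoly R n :=
  ∑ i : Fin n, truncC R n (v i) * tgen R n ^ (i : ℕ)

lemma lamOf_eq_mk (v : Fin n → R) :
    lamOf R n v = truncMk R n (∑ i : Fin n, Polynomial.C (v i) * Polynomial.X ^ (i : ℕ)) := by
  rw [map_sum]
  refine Finset.sum_congr rfl fun i _ => ?_
  rw [map_mul, map_pow]
  rfl

lemma coeffs_lamOf (v : Fin n → R) : coeffs R n (lamOf R n v) = v := by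
  rw [lamOf_eq_mk, coeffs_mk]
  funext j
  simp only [low, Polynomial.finset_sum_coeff]
  rw [Finset.sum_eq_single j]
  · simp [Polynomial.coeff_C_mul, Polynomial.coeff_X_pow]
  · intro i _ hij
    simp only [Polynomial.coeff_C_mul, Polynomial.coeff_X_pow]
    rw [if_neg (fun h : (j:ℕ) = (i:ℕ) => hij (Fin.ext h.symm)), mul_zero]
  · simp

lemma lamOf_coeffs (x : TruncPoly R n) : lamOf R n (coeffs R n x) = x :=
  coeffs_injective R n (by rw [coeffs_lamOf])

lemma coeffs_add (x y : TruncPoly R n) :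
    coeffs R n (x + y) = coeffs R n x + coeffs R n y := by
  obtain ⟨f, rfl⟩ := truncMk_surjective R n x
  obtain ⟨g, rfl⟩ := truncMk_surjective R n y
  rw [← map_add, coeffs_mk, coeffs_mk, coeffs_mk]
  funext i; simp [low]

lemma coeffs_zero : coeffs R n 0 = 0 := by
  rw [← (truncMk R n).map_zero, coeffs_mk]; funext i; simp [low]

lemma coeffs_C_mul (a : R) (x : TruncPoly R n) (j : Fin n) :
    coeffs R n (truncC R n a * x) j = a * coeffs R n x j := by
  obtain ⟨f, rfl⟩ := truncMk_surjective R n x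
  have : truncC R n a * truncMk R n f = truncMk R n (Polynomial.C a * f) := by
    rw [map_mul]; rfl
  rw [this, coeffs_mk, coeffs_mk]
  simp [low, Polynomial.coeff_C_mul]

lemma lamOf_smul (a : R) (v : Fin n → R) :
    lamOf R n (a • v) = truncC R n a * lamOf R n v := by
  rw [lamOf, lamOf, Finset.mul_sum]
  refine Finset.sum_congr rfl fun i _ => ?_
  rw [Pi.smul_apply, smul_eq_mul, map_mul, mul_assoc]

lemma lamOf_add (v w : Fin n → R) :
    lamOf R n (v + w) = lamOf R n v + lamOf R n w := by
  rw [lamOf, lamOf, lamOf, ← Finset.sum_add_distrib]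
  refine Finset.sum_congr rfl fun i _ => ?_
  rw [Pi.add_apply, map_add, add_mul]

/-- `t` commutes with everything in the image of `truncC`. -/
lemma tgen_pow_mul_truncC (i : ℕ) (a : R) :
    tgen R n ^ i * truncC R n a = truncC R n a * tgen R n ^ i := by
  have : (Polynomial.X : Polynomial R) ^ i * Polynomial.C a
      = Polynomial.C a * Polynomial.X ^ i := by
    induction i with
    | zero => simp
    | succ k ih => rw [pow_succ, mul_assoc, Polynomial.X_mul_C, ← mul_assoc, ih, mul_assoc,
        ← pow_succ]
  have h2 := congrArg (truncMk R n) this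
  rw [map_mul, map_mul, map_pow] at h2
  exact h2

lemma coeffs_tgen_mul (x : TruncPoly R n) (j : Fin n) :
    coeffs R n (tgen R n * x) j
      = if h : (j : ℕ) = 0 then 0 else coeffs R n x ⟨(j : ℕ) - 1, by have := j.is_lt; omega⟩ := by
  obtain ⟨f, rfl⟩ := truncMk_surjective R n x
  have : tgen R n * truncMk R n f = truncMk R n (Polynomial.X * f) := by rw [map_mul]; rfl
  rw [this, coeffs_mk, coeffs_mk]
  by_cases h : (j : ℕ) = 0
  · simp [low, h]
  · obtain ⟨k, hk⟩ : ∃ k, (j : ℕ) = k + 1 := ⟨(j:ℕ) - 1, by omega⟩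
    simp [low, h, hk, Polynomial.coeff_X_mul]

lemma coeffs_tgen_pow_mul (x : TruncPoly R n) (i : ℕ) (j : Fin n) (hij : i ≤ (j : ℕ)) :
    coeffs R n (tgen R n ^ i * x) j
      = coeffs R n x ⟨(j : ℕ) - i, by have := j.is_lt; omega⟩ := by
  obtain ⟨f, rfl⟩ := truncMk_surjective R n x
  have : tgen R n ^ i * truncMk R n f = truncMk R n (Polynomial.X ^ i * f) := by
    rw [map_mul, map_pow]; rfl
  rw [this, coeffs_mk, coeffs_mk]
  obtain ⟨d, hd⟩ : ∃ d, (j : ℕ) = d + i := ⟨(j:ℕ) - i, by omega⟩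
  simp only [low, hd]
  rw [Polynomial.coeff_X_pow_mul]
  congr 1
  omega


end DevAux

section DevAux

open CategoryTheory

variable (R : Type u) [Ring R] (n : ℕ)

/-- restriction of scalars along `truncC` -/
abbrev Res : ModuleCat.{u} (TruncPoly R n) ⥤ ModuleCat.{u} R :=
  ModuleCat.restrictScalars (truncC R n)

variable {R n}

/-- the last coefficient index -/
def lastIdx (hn : 0 < n) : Fin n := ⟨n - 1, by omega⟩

section P
variable (hn : 0 < n) (P : ModuleCat.{u} (TruncPoly R n))

/-- Frobenius map `Hom_Λ(P, Λ) → Hom_R(P, R)` -/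
def frobTo (f : P ⟶ ModuleCat.of (TruncPoly R n) (TruncPoly R n)) :
    (Res R n).obj P ⟶ ModuleCat.of R R := ModuleCat.ofHom (X := (Res R n).obj P) (Y := R) {
  toFun := fun p => coeffs R n (f p) (lastIdx hn)
  map_add' := fun p q => by
    show coeffs R n (f (p + q)) (lastIdx hn)
      = coeffs R n (f p) (lastIdx hn) + coeffs R n (f q) (lastIdx hn)
    rw [show f (p + q) = f (show P from p) + f (show P from q) from map_add f.hom _ _, coeffs_add]
    rfl
  map_smul' := fun r p => by
    show coeffs R n (f (truncC R n r • p)) (lastIdx hn) = r • coeffs R n (f p) (lastIdx hn)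
    rw [show f (truncC R n r • p) = truncC R n r • f (show P from p) from map_smul f.hom _ _,
      smul_eq_mul, coeffs_C_mul, smul_eq_mul] }

/-- Inverse Frobenius map `Hom_R(P, R) → Hom_Λ(P, Λ)`, as a bare function on points first -/
def frobInvFun (g : (Res R n).obj P ⟶ ModuleCat.of R R) (p : P) : TruncPoly R n :=
  lamOf R n (fun j => g ((tgen R n ^ (n - 1 - (j : ℕ))) • p))

lemma frobInvFun_add (g : (Res R n).obj P ⟶ ModuleCat.of R R) (p q : P) :
    frobInvFun P g (p + q) = frobInvFun P g p + frobInvFun P g q := by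
  rw [frobInvFun, frobInvFun, frobInvFun, ← lamOf_add]
  congr 1
  funext j
  rw [smul_add]
  exact map_add g.hom _ _

lemma frobInvFun_C_smul (g : (Res R n).obj P ⟶ ModuleCat.of R R) (a : R) (p : P) :
    frobInvFun P g (truncC R n a • p) = truncC R n a * frobInvFun P g p := by
  rw [frobInvFun, frobInvFun]
  have : (fun j : Fin n => g ((tgen R n ^ (n - 1 - (j : ℕ))) • truncC R n a • p))
      = a • (fun j : Fin n => g ((tgen R n ^ (n - 1 - (j : ℕ))) • p)) := by
    funext j
    rw [smul_smul, tgen_pow_mul_truncC, ← smul_smul]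
    have := g.hom.map_smul a ((tgen R n ^ (n - 1 - (j : ℕ))) • p)
    exact this
  rw [this, lamOf_smul]

lemma frobInvFun_t_smul (g : (Res R n).obj P ⟶ ModuleCat.of R R) (p : P) :
    frobInvFun P g (tgen R n • p) = tgen R n * frobInvFun P g p := by
  apply coeffs_injective
  funext j
  rw [frobInvFun, coeffs_lamOf, frobInvFun, coeffs_tgen_mul]
  by_cases hj : (j : ℕ) = 0
  · rw [dif_pos hj, hj, smul_smul, ← pow_succ]
    have hxn : n - 1 - 0 + 1 = n := by have := j.is_lt; omega
    rw [hxn, tgen_pow_eq_zero, zero_smul]; exact map_zero g.hom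
  · rw [dif_neg hj, coeffs_lamOf, smul_smul, ← pow_succ]
    have : n - 1 - (j : ℕ) + 1 = n - 1 - ((j : ℕ) - 1) := by have := j.is_lt; omega
    rw [this]

lemma frobInvFun_smul (g : (Res R n).obj P ⟶ ModuleCat.of R R) (x : TruncPoly R n) (p : P) :
    frobInvFun P g (x • p) = x * frobInvFun P g p := by
  obtain ⟨f, rfl⟩ := truncMk_surjective R n x
  induction f using Polynomial.induction_on' with
  | add f₁ f₂ h1 h2 =>
      rw [map_add, add_smul, frobInvFun_add, h1, h2, add_mul]
  | monomial k a =>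
      rw [← Polynomial.C_mul_X_pow_eq_monomial, map_mul, map_pow]
      have hC : truncMk R n (Polynomial.C a) = truncC R n a := rfl
      have hX : truncMk R n Polynomial.X = tgen R n := rfl
      rw [hC, hX]
      have htpow : ∀ (k : ℕ) (q : P),
          frobInvFun P g ((tgen R n ^ k) • q) = tgen R n ^ k * frobInvFun P g q := by
        intro k
        induction k with
        | zero => intro q; simp
        | succ m ih =>
            intro q
            rw [pow_succ, mul_smul, ih, frobInvFun_t_smul, ← mul_assoc]
      rw [mul_smul, frobInvFun_C_smul, htpow, mul_assoc]

/-- Inverse Frobenius map as a Λ-linear map -/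
def frobInv (g : (Res R n).obj P ⟶ ModuleCat.of R R) :
    P ⟶ ModuleCat.of (TruncPoly R n) (TruncPoly R n) := ModuleCat.ofHom {
  toFun := frobInvFun P g
  map_add' := frobInvFun_add P g
  map_smul' := fun x p => by
    rw [RingHom.id_apply, smul_eq_mul]
    exact frobInvFun_smul P g x p }

/-- The Frobenius additive equivalence. -/
def frobEquiv : (P ⟶ ModuleCat.of (TruncPoly R n) (TruncPoly R n))
    ≃+ ((Res R n).obj P ⟶ ModuleCat.of R R) where
  toFun := frobTo hn P
  invFun := frobInv P
  left_inv := fun f => by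
    apply ModuleCat.hom_ext
    apply LinearMap.ext
    intro p
    apply coeffs_injective
    funext j
    show coeffs R n (frobInvFun P (frobTo hn P f) p) j = coeffs R n (f p) j
    rw [frobInvFun, coeffs_lamOf]
    show coeffs R n (f ((tgen R n ^ (n - 1 - (j:ℕ))) • p)) (lastIdx hn) = _
    rw [map_smul, smul_eq_mul,
      coeffs_tgen_pow_mul R n _ _ (lastIdx hn) (by show _ ≤ n - 1; omega)]
    congr 1
    apply Fin.ext
    show (n-1) - (n - 1 - (j:ℕ)) = (j:ℕ)
    have := j.is_lt; omega
  right_inv := fun g => by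
    apply ModuleCat.hom_ext
    apply LinearMap.ext
    intro p
    show coeffs R n (frobInvFun P g p) (lastIdx hn) = g p
    unfold frobInvFun; rw [coeffs_lamOf]
    show g ((tgen R n ^ (n - 1 - (n-1))) • p) = g p
    rw [Nat.sub_self, pow_zero, one_smul]
  map_add' := fun f₁ f₂ => by
    apply ModuleCat.hom_ext
    apply LinearMap.ext
    intro p
    show coeffs R n ((f₁ + f₂) p) (lastIdx hn)
      = coeffs R n (f₁ p) (lastIdx hn) + coeffs R n (f₂ p) (lastIdx hn)
    rw [show (f₁ + f₂) p = f₁ p + f₂ p from rfl, coeffs_add]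
    rfl

/-- Naturality of the Frobenius map. -/
lemma frobTo_naturality {P' : ModuleCat.{u} (TruncPoly R n)} (h : P' ⟶ P)
    (f : P ⟶ ModuleCat.of (TruncPoly R n) (TruncPoly R n)) :
    frobTo hn P' (h ≫ f) = (Res R n).map h ≫ frobTo hn P f := by
  apply ModuleCat.hom_ext
  apply LinearMap.ext
  intro p
  rfl

end P

end DevAux

section DevAux

open CategoryTheory Limits

variable (R : Type u) [Ring R] (n : ℕ)

instance resAdditive : (Res R n).Additive where
  map_add := ModuleCat.hom_ext (LinearMap.ext fun _ => rfl)

instance resPreservesHomology : (Res R n).PreservesHomology := by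
  apply Functor.preservesHomology_of_map_exact
  intro S hS
  rw [ShortComplex.moduleCat_exact_iff] at hS ⊢
  intro x₂ hx₂
  exact hS x₂ hx₂

/-- `R[t]/(t^n)` is isomorphic to `R^n` as a left `R`-module. -/
def coeffsEquiv :
    ((Res R n).obj (ModuleCat.of (TruncPoly R n) (TruncPoly R n))) ≃ₗ[R] (Fin n → R) where
  toFun := coeffs R n
  invFun := lamOf R n
  left_inv := lamOf_coeffs R n
  right_inv := coeffs_lamOf R n
  map_add' := coeffs_add R n
  map_smul' := fun r x => by
    show coeffs R n (truncC R n r * (show TruncPoly R n from x)) = r • coeffs R n x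
    funext j
    rw [coeffs_C_mul]
    rfl

lemma lamProjective :
    Module.Projective R ((Res R n).obj (ModuleCat.of (TruncPoly R n) (TruncPoly R n))) :=
  Module.Projective.of_equiv (coeffsEquiv R n).symm

instance coextPreservesEpi :
    (ModuleCat.coextendScalars (truncC R n)).PreservesEpimorphisms where
  preserves := fun {M M'} g hg => by
    rw [ModuleCat.epi_iff_surjective] at hg ⊢
    intro h
    haveI := lamProjective R n
    obtain ⟨h', hh'⟩ := Module.projective_lifting_property g.hom h hg
    exact ⟨h', hh'⟩

lemma resProjective (P : ModuleCat.{u} (TruncPoly R n)) [Projective P] :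
    Projective ((Res R n).obj P) :=
  (ModuleCat.restrictCoextendScalarsAdj.{u} (truncC R n)).map_projective P ‹_›

/-- transport a projective resolution along restriction of scalars -/
def resResolution {N : ModuleCat.{u} (TruncPoly R n)} (P : ProjectiveResolution N) :
    ProjectiveResolution ((Res R n).obj N) where
  complex := ((Res R n).mapHomologicalComplex _).obj P.complex
  projective := fun m => resProjective R n (P.complex.X m)
  π := ((Res R n).mapHomologicalComplex _).map P.π ≫
    (HomologicalComplex.singleMapHomologicalComplex (Res R n) (ComplexShape.down ℕ) 0).hom.app N
  quasiIso := by
    haveI : QuasiIso (((Res R n).mapHomologicalComplex _).map P.π) := ⟨fun i => inferInstance⟩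
    infer_instance


end DevAux

section DevAux

open CategoryTheory Limits

variable {R : Type u} [Ring R] {n : ℕ}

/-- The comparison of Hom complexes coming from the Frobenius property. -/
def yonedaComplexIso (hn : 0 < n) {N : ModuleCat.{u} (TruncPoly R n)}
    (P : ProjectiveResolution N) :
    P.complex.linearYonedaObj ℤ (ModuleCat.of (TruncPoly R n) (TruncPoly R n))
      ≅ ChainComplex.linearYonedaObj (((Res R n).mapHomologicalComplex _).obj P.complex) ℤ
          (ModuleCat.of R R) :=
  HomologicalComplex.Hom.isoOfComponents
    (fun i => ((frobEquiv hn (P.complex.X i)).toIntLinearEquiv).toModuleIso)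
    (fun i j _ => by
      apply ModuleCat.hom_ext
      apply LinearMap.ext
      intro g
      exact frobTo_naturality hn _ (P.complex.d j i) g)

/-- The main comparison isomorphism of Ext groups. -/
def extIso (hn : 0 < n) (N : ModuleCat.{u} (TruncPoly R n)) (k : ℕ) :
    ((Ext ℤ (ModuleCat.{u} (TruncPoly R n)) k).obj (Opposite.op N)).obj
        (ModuleCat.of (TruncPoly R n) (TruncPoly R n))
      ≅ ((Ext ℤ (ModuleCat.{u} R) k).obj (Opposite.op ((Res R n).obj N))).obj
          (ModuleCat.of R R) := by
  have P : ProjectiveResolution N := (HasProjectiveResolution.out (Z := N)).some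
  exact (P.isoExt k _) ≪≫
    (HomologicalComplex.homologyFunctor _ _ k).mapIso (yonedaComplexIso hn P) ≪≫
    ((resResolution R n P).isoExt k _).symm

lemma isZero_ext_iff (hn : 0 < n) (N : ModuleCat.{u} (TruncPoly R n)) (k : ℕ) :
    IsZero (((Ext ℤ (ModuleCat.{u} (TruncPoly R n)) k).obj (Opposite.op N)).obj
        (ModuleCat.of (TruncPoly R n) (TruncPoly R n)))
      ↔ IsZero (((Ext ℤ (ModuleCat.{u} R) k).obj (Opposite.op ((Res R n).obj N))).obj
          (ModuleCat.of R R)) :=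
  ⟨fun h => h.of_iso (extIso hn N k).symm, fun h => h.of_iso (extIso hn N k)⟩


end DevAux

section DevAux

open CategoryTheory Limits

section Eps
variable (R : Type u) [Ring R] (n : ℕ)

/-- The augmentation `R[t]/(t^n) → R`, killing `t`. -/
def eps (hn : 0 < n) : TruncPoly R n →+* R :=
  RingQuot.lift ⟨Polynomial.constantCoeff, by
    rintro x y ⟨rfl, rfl⟩
    simp only [Polynomial.constantCoeff_apply, map_zero, Polynomial.coeff_X_pow,
      Polynomial.coeff_zero]
    rw [if_neg (by omega)]⟩

lemma eps_truncC (hn : 0 < n) (r : R) : eps R n hn (truncC R n r) = r := by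
  rw [truncC, RingHom.comp_apply, eps, truncMk, RingQuot.lift_mkRingHom_apply]
  exact Polynomial.coeff_C_zero

end Eps

section Fin
variable {R : Type u} [Ring R] {n : ℕ}

lemma finite_restrict (hn : 0 < n) (N : Type u) [AddCommGroup N]
    [Module (TruncPoly R n) N] [Module.Finite (TruncPoly R n) N] :
    @Module.Finite R N _ _ (Module.compHom N (truncC R n)) := by
  letI instR : Module R N := Module.compHom N (truncC R n)
  classical
  obtain ⟨S, hS⟩ := Module.Finite.fg_top (R := TruncPoly R n) (M := N)
  have smul_def : ∀ (r : R) (y : N), r • y = truncC R n r • y := fun _ _ => rfl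
  refine ⟨⟨((Finset.univ : Finset (Fin n)) ×ˢ S).image
    (fun p => (tgen R n ^ (p.1 : ℕ)) • p.2), ?_⟩⟩
  rw [Submodule.eq_top_iff']
  intro x
  set T : Submodule R N := Submodule.span R
    (((Finset.univ : Finset (Fin n)) ×ˢ S).image
      (fun p => (tgen R n ^ (p.1 : ℕ)) • p.2) : Set N) with hT
  show x ∈ T
  have hmemT : ∀ (i : Fin n), ∀ s ∈ S, (tgen R n ^ (i : ℕ)) • s ∈ T := by
    intro i s hs
    apply Submodule.subset_span
    simp only [Finset.coe_image, Set.mem_image]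
    exact ⟨(i, s), by simp [hs], rfl⟩
  have htcl : ∀ y ∈ T, tgen R n • y ∈ T := by
    intro y hy
    induction hy using Submodule.span_induction with
    | mem z hz =>
        simp only [Finset.coe_image, Set.mem_image] at hz
        obtain ⟨⟨i, s⟩, hps, rfl⟩ := hz
        have hsS : s ∈ S := by
          simp only [Finset.mem_coe, Finset.mem_product] at hps
          exact hps.2
        rw [smul_smul, ← pow_succ']
        by_cases hi : (i : ℕ) + 1 < n
        · exact hmemT ⟨(i : ℕ) + 1, hi⟩ s hsS
        · have : (i : ℕ) + 1 = n := by have := i.is_lt; omega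
          rw [this, tgen_pow_eq_zero, zero_smul]
          exact T.zero_mem
    | zero => rw [smul_zero]; exact T.zero_mem
    | add a b _ _ ha hb => rw [smul_add]; exact T.add_mem ha hb
    | smul r z _ hz =>
        rw [smul_def, smul_smul]
        have comm : tgen R n * truncC R n r = truncC R n r * tgen R n := by
          have := tgen_pow_mul_truncC R n 1 r
          rwa [pow_one] at this
        rw [comm, ← smul_smul, ← smul_def]
        exact T.smul_mem r (hz)
  have htpow : ∀ (i : ℕ), ∀ y ∈ T, (tgen R n ^ i) • y ∈ T := by
    intro i
    induction i with
    | zero => intro y hy; rwa [pow_zero, one_smul]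
    | succ m ih =>
        intro y hy
        rw [pow_succ', mul_smul]
        exact htcl _ (ih y hy)
  have hx : x ∈ Submodule.span (TruncPoly R n) (S : Set N) := by rw [hS]; trivial
  induction hx using Submodule.span_induction with
  | mem z hz =>
      have := hmemT ⟨0, hn⟩ z hz
      rwa [pow_zero, one_smul] at this
  | zero => exact T.zero_mem
  | add a b _ _ ha hb => exact T.add_mem ha hb
  | smul a z _ hz =>
      have : a • z = ∑ i : Fin n, (coeffs R n a i) • ((tgen R n ^ (i : ℕ)) • z) := by
        conv_lhs => rw [← lamOf_coeffs R n a]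
        rw [lamOf, Finset.sum_smul]
        refine Finset.sum_congr rfl fun i _ => ?_
        rw [mul_smul, smul_def]
      rw [this]
      exact Submodule.sum_mem T fun i _ => T.smul_mem _ (htpow (i : ℕ) z hz)

lemma finite_corestrict (hn : 0 < n) (M : Type u) [AddCommGroup M] [Module R M]
    [Module.Finite R M] :
    @Module.Finite (TruncPoly R n) M _ _ (Module.compHom M (eps R n hn)) := by
  letI instL : Module (TruncPoly R n) M := Module.compHom M (eps R n hn)
  have smul_def : ∀ (x : TruncPoly R n) (y : M), x • y = eps R n hn x • y := fun _ _ => rfl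
  obtain ⟨S, hS⟩ := Module.Finite.fg_top (R := R) (M := M)
  refine ⟨⟨S, ?_⟩⟩
  rw [Submodule.eq_top_iff']
  intro x
  have hx : x ∈ Submodule.span R (S : Set M) := by rw [hS]; trivial
  induction hx using Submodule.span_induction with
  | mem z hz => exact Submodule.subset_span hz
  | zero => exact Submodule.zero_mem _
  | add a b _ _ ha hb => exact Submodule.add_mem _ ha hb
  | smul a z _ hz =>
      have : a • z = truncC R n a • z := by rw [smul_def, eps_truncC]
      rw [this]
      exact Submodule.smul_mem _ _ hz

end Fin
end DevAux

/-- **Statement 14.** Let `R` be an Artin algebra and `n ≥ 2`. Then `R` satisfies the Strong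
Nakayama Conjecture — for every nonzero finitely generated left `R`-module `M` there is a
`k ≥ 0` with `Ext^k_R(M, R) ≠ 0` — iff `R[t]/(t^n)` satisfies it. -/
theorem statement14 (R : Type u) [Ring R] (C : Type u) [CommRing C] [IsArtinianRing C]
    [Algebra C R] (hfg : Module.Finite C R) (n : ℕ) (hn : 2 ≤ n) :
    (∀ (M : Type u) (_ : AddCommGroup M) (_ : Module R M),
        Module.Finite R M → Nontrivial M → SomeExtNonzero R M) ↔
    (∀ (N : Type u) (_ : AddCommGroup N) (_ : Module (TruncPoly R n) N),
        Module.Finite (TruncPoly R n) N → Nontrivial N →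
          SomeExtNonzero (TruncPoly R n) N) := by
  have hn0 : 0 < n := by omega
  constructor
  · intro hR N instA instM hNfg hNnt
    letI instR : Module R N := Module.compHom N (truncC R n)
    obtain ⟨k, hk⟩ := hR N instA instR (finite_restrict (R := R) hn0 N) hNnt
    refine ⟨k, fun h => hk ?_⟩
    have := (isZero_ext_iff hn0 (ModuleCat.of (TruncPoly R n) N) k).mp h
    exact this
  · intro hL M instA instM hMfg hMnt
    letI instL : Module (TruncPoly R n) M := Module.compHom M (eps R n hn0)
    obtain ⟨k, hk⟩ := hL M instA instL (finite_corestrict hn0 M) hMnt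
    refine ⟨k, fun h => hk ?_⟩
    rw [isZero_ext_iff hn0 (ModuleCat.of (TruncPoly R n) M) k]
    -- transport the zero-ness along the identification of the restricted module with `M`
    have e : (Res R n).obj (ModuleCat.of (TruncPoly R n) M) ≅ ModuleCat.of R M :=
      LinearEquiv.toModuleIso (X₁ := (Res R n).obj (ModuleCat.of (TruncPoly R n) M)) (X₂ := M)
        (m₁ := ModuleCat.isModule _)
        { __ := AddEquiv.refl M
          map_smul' := fun r m =>
            congrArg (fun a : R => a • (show M from m)) (eps_truncC R n hn0 r) }
    exact h.of_iso (((Ext ℤ (ModuleCat.{u} R) k).mapIso e.op).app (ModuleCat.of R R)).symm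


end Paper
end
end

section
/- Let A be an abelian category, n ≥ 2, and 0 → X →f Y →g Z → 0 a short exact sequence in A[ε]^n (i.e., a sequence of morphisms of n-th differential objects that is short exact in A). Then for every 1 ≤ r ≤ n−1 there exist connecting morphisms ∂ : H_(r)(Z) → H_(n−r)(X) and ∂ : H_(n−r)(Z) → H_(r)(X) making the doubly infinite periodic sequence ⋯ →∂ H_(r)(X) → H_(r)(Y) → H_(r)(Z) →∂ H_(n−r)(X) → H_(n−r)(Y) → H_(n−r)(Z) →∂ H_(r)(X) → ⋯ exact, where the unlabeled maps are H_(r)(f), H_(r)(g), H_(n−r)(f), H_(n−r)(g). -/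
noncomputable section

namespace Paper

open CategoryTheory CategoryTheory.Limits

universe v u

variable {C : Type u} [Category.{v} C]

/-- The `k`-fold composition power of an endomorphism. -/
def cpow {X : C} (f : X ⟶ X) : ℕ → (X ⟶ X)
  | 0 => 𝟙 X
  | k + 1 => f ≫ cpow f k

lemma cpow_add {X : C} (f : X ⟶ X) (a b : ℕ) :
    cpow f (a + b) = cpow f a ≫ cpow f b := by
  induction a with
  | zero => simp [cpow]
  | succ k ih =>
    rw [Nat.succ_add]
    show f ≫ cpow f (k + b) = (f ≫ cpow f k) ≫ cpow f b
    rw [ih, Category.assoc]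

variable (C) in
/-- The category of `n`-th differential objects over an additive category `C`:
objects are pairs `(X, ε)` with `ε : X ⟶ X` satisfying `ε^n = 0`. -/
structure DiffObj [Preadditive C] (n : ℕ) where
  X : C
  ε : X ⟶ X
  pow_zero : cpow ε n = 0

variable [Preadditive C] {n : ℕ}

/-- Morphisms of `n`-th differential objects. -/
@[ext] structure DiffHom (A B : DiffObj C n) where
  hom : A.X ⟶ B.X
  comm : A.ε ≫ hom = hom ≫ B.ε

instance : Category (DiffObj C n) where
  Hom A B := DiffHom A B
  id A := ⟨𝟙 A.X, by simp⟩
  comp f g := ⟨f.hom ≫ g.hom, by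
    rw [← Category.assoc, f.comm, Category.assoc, g.comm, Category.assoc]⟩
  id_comp f := DiffHom.ext (Category.id_comp _)
  comp_id f := DiffHom.ext (Category.comp_id _)
  assoc f g h := DiffHom.ext (Category.assoc _ _ _)

/-- The underlying morphism in `C` of a morphism of differential objects. -/
def dhom {A B : DiffObj C n} (f : A ⟶ B) : A.X ⟶ B.X := DiffHom.hom f

lemma dcomm {A B : DiffObj C n} (f : A ⟶ B) : A.ε ≫ dhom f = dhom f ≫ B.ε := DiffHom.comm f

@[simp] lemma dhom_comp {A B D : DiffObj C n} (f : A ⟶ B) (g : B ⟶ D) :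
    dhom (f ≫ g) = dhom f ≫ dhom g := rfl

@[simp] lemma dhom_id (A : DiffObj C n) : dhom (𝟙 A) = 𝟙 A.X := rfl

section AddCommGroup

variable {A B : DiffObj C n}

instance : Zero (DiffHom A B) := ⟨⟨0, by simp⟩⟩
instance : Add (DiffHom A B) :=
  ⟨fun f g => ⟨f.hom + g.hom, by simp [f.comm, g.comm]⟩⟩
instance : Neg (DiffHom A B) := ⟨fun f => ⟨-f.hom, by simp [f.comm]⟩⟩
instance : Sub (DiffHom A B) :=
  ⟨fun f g => ⟨f.hom - g.hom, by simp [f.comm, g.comm]⟩⟩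
instance : SMul ℕ (DiffHom A B) :=
  ⟨fun k f => ⟨k • f.hom, by simp [f.comm]⟩⟩
instance : SMul ℤ (DiffHom A B) :=
  ⟨fun k f => ⟨k • f.hom, by simp [f.comm]⟩⟩

instance : AddCommGroup (DiffHom A B) :=
  Function.Injective.addCommGroup DiffHom.hom (fun _ _ h => DiffHom.ext h)
    rfl (fun _ _ => rfl) (fun _ => rfl) (fun _ _ => rfl) (fun _ _ => rfl) (fun _ _ => rfl)

end AddCommGroup

instance : Preadditive (DiffObj C n) where
  homGroup A B := inferInstanceAs (AddCommGroup (DiffHom A B))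
  add_comp P Q R' f f' g :=
    DiffHom.ext (Preadditive.add_comp _ _ _ (dhom f) (dhom f') (dhom g))
  comp_add P Q R' f g g' :=
    DiffHom.ext (Preadditive.comp_add _ _ _ (dhom f) (dhom g) (dhom g'))

@[simp] lemma dhom_add {A B : DiffObj C n} (f g : A ⟶ B) :
    dhom (f + g) = dhom f + dhom g := rfl

@[simp] lemma dhom_zero (A B : DiffObj C n) : dhom (0 : A ⟶ B) = 0 := rfl

variable (C n) in
/-- The forgetful functor `C[ε]^n → C`. -/
def Fgt : DiffObj C n ⥤ C where
  obj A := A.X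
  map f := dhom f
  map_id _ := rfl
  map_comp _ _ := rfl

instance : Functor.Additive (Fgt C n) where
  map_add := rfl

section Homology

variable {A : Type u} [Category.{v} A] [Abelian A] {n : ℕ}

lemma cpow_dhom_comm {P Q : DiffObj A n} (f : P ⟶ Q) (k : ℕ) :
    cpow P.ε k ≫ dhom f = dhom f ≫ cpow Q.ε k := by
  induction k with
  | zero =>
    show 𝟙 P.X ≫ dhom f = dhom f ≫ 𝟙 Q.X
    simp
  | succ m ih =>
    show (P.ε ≫ cpow P.ε m) ≫ dhom f = dhom f ≫ (Q.ε ≫ cpow Q.ε m)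
    rw [Category.assoc, ih, ← Category.assoc, dcomm f, Category.assoc]

/-- The short complex `X --ε^{n-r}--> X --ε^r--> X` attached to an `n`-th differential
object `(X, ε)`. -/
def scOf (P : DiffObj A n) (r : ℕ) (h : r ≤ n) : ShortComplex A :=
  ShortComplex.mk (cpow P.ε (n - r)) (cpow P.ε r)
    (by rw [← cpow_add, Nat.sub_add_cancel h]; exact P.pow_zero)

/-- The `r`-th homology `H_(r)(X) = Ker(ε^r)/Im(ε^{n-r})` of an `n`-th differential object. -/
def Hr (P : DiffObj A n) (r : ℕ) (h : r ≤ n) : A := (scOf P r h).homology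

/-- The morphism of short complexes attached to a morphism of differential objects. -/
def scMap {P Q : DiffObj A n} (f : P ⟶ Q) (r : ℕ) (h : r ≤ n) : scOf P r h ⟶ scOf Q r h where
  τ₁ := dhom f
  τ₂ := dhom f
  τ₃ := dhom f
  comm₁₂ := (cpow_dhom_comm f (n - r)).symm
  comm₂₃ := (cpow_dhom_comm f r).symm

/-- The induced morphism `H_(r)(f) : H_(r)(X) → H_(r)(Y)`. -/
def Hmap {P Q : DiffObj A n} (f : P ⟶ Q) (r : ℕ) (h : r ≤ n) : Hr P r h ⟶ Hr Q r h :=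
  ShortComplex.homologyMap (scMap f r h)

end Homology

/-- Exactness of a pair of composable morphisms at the middle object. -/
def ExactAt {A : Type u} [Category.{v} A] [Abelian A] {P Q R : A} (u : P ⟶ Q) (v : Q ⟶ R) :
    Prop :=
  ∃ w : u ≫ v = 0, (ShortComplex.mk u v w).Exact

section LES
variable {A : Type u} [Category.{v} A] [Abelian A] {n : ℕ}

/-- The 2-periodic cochain complex attached to a differential object. -/
def cx (P : DiffObj A n) (r : ℕ) (h : r ≤ n) : CochainComplex A ℤ where
  X _ := P.X
  d i j := if i + 1 = j then (if Even i then cpow P.ε r else cpow P.ε (n - r)) else 0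
  shape i j hij := if_neg hij
  d_comp_d' i j k hij hjk := by
    change i + 1 = j at hij
    change j + 1 = k at hjk
    show (if i + 1 = j then (if Even i then cpow P.ε r else cpow P.ε (n - r)) else 0) ≫
      (if j + 1 = k then (if Even j then cpow P.ε r else cpow P.ε (n - r)) else 0) = 0
    rw [if_pos hij, if_pos hjk]
    subst hij
    by_cases hi : Even i
    · rw [if_pos hi, if_neg (by simpa [Int.even_add_one] using hi)]
      rw [← cpow_add, Nat.add_sub_cancel' h, P.pow_zero]
    · rw [if_neg hi, if_pos (by simpa [Int.even_add_one] using hi)]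
      rw [← cpow_add, Nat.sub_add_cancel h, P.pow_zero]

def cxMap {P Q : DiffObj A n} (φ : P ⟶ Q) (r : ℕ) (h : r ≤ n) : cx P r h ⟶ cx Q r h where
  f _ := dhom φ
  comm' i j hij := by
    dsimp [cx]
    have hij' : i + 1 = j := hij
    rw [if_pos hij', if_pos hij']
    by_cases hi : Even i
    · rw [if_pos hi, if_pos hi]; exact (cpow_dhom_comm φ r).symm
    · rw [if_neg hi, if_neg hi]; exact (cpow_dhom_comm φ (n - r)).symm

/-- Identification of `sc'` at degree `0` with `scOf P r`. -/
def e0 (P : DiffObj A n) (r : ℕ) (h : r ≤ n) : (cx P r h).sc' (-1) 0 1 ≅ scOf P r h :=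
  ShortComplex.isoMk (Iso.refl _) (Iso.refl _) (Iso.refl _)
    (by dsimp [cx, scOf]; exact (Category.id_comp _).trans (Category.comp_id _).symm) (by dsimp [cx, scOf]; exact (Category.id_comp _).trans (Category.comp_id _).symm)

/-- Identification of `sc'` at degree `1` with `scOf P (n - r)`. -/
def e1 (P : DiffObj A n) (r : ℕ) (h : r ≤ n) :
    (cx P r h).sc' 0 1 2 ≅ scOf P (n - r) (Nat.sub_le n r) :=
  ShortComplex.isoMk (Iso.refl _) (Iso.refl _) (Iso.refl _)
    (by dsimp [cx, scOf]; rw [Nat.sub_sub_self h]; exact (Category.id_comp _).trans (Category.comp_id _).symm)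
    (by dsimp [cx, scOf]; exact (Category.id_comp _).trans (Category.comp_id _).symm)

def HrIso0 (P : DiffObj A n) (r : ℕ) (h : r ≤ n) : (cx P r h).homology 0 ≅ Hr P r h :=
  HomologicalComplex.homologyIsoSc' _ (-1) 0 1 (by simp) (by simp) ≪≫
    ShortComplex.homologyMapIso (e0 P r h)

def HrIso1 (P : DiffObj A n) (r : ℕ) (h : r ≤ n) :
    (cx P r h).homology 1 ≅ Hr P (n - r) (Nat.sub_le n r) :=
  HomologicalComplex.homologyIsoSc' _ 0 1 2 (by simp) (by simp) ≪≫
    ShortComplex.homologyMapIso (e1 P r h)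

lemma XIsoOfEq_cx_hom (P : DiffObj A n) (r : ℕ) (h : r ≤ n) {i j : ℤ} (hij : i = j) :
    (HomologicalComplex.XIsoOfEq (cx P r h) hij).hom = 𝟙 P.X := by
  subst hij; rfl

lemma nat0 {P Q : DiffObj A n} (φ : P ⟶ Q) (r : ℕ) (h : r ≤ n) :
    HomologicalComplex.homologyMap (cxMap φ r h) 0 ≫ (HrIso0 Q r h).hom =
      (HrIso0 P r h).hom ≫ Hmap φ r h := by
  show ShortComplex.homologyMap ((HomologicalComplex.shortComplexFunctor A _ 0).map (cxMap φ r h)) ≫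
      ShortComplex.homologyMap ((cx Q r h).isoSc' (-1) 0 1 (by simp) (by simp)).hom ≫
        ShortComplex.homologyMap (e0 Q r h).hom =
    (ShortComplex.homologyMap ((cx P r h).isoSc' (-1) 0 1 (by simp) (by simp)).hom ≫
        ShortComplex.homologyMap (e0 P r h).hom) ≫ ShortComplex.homologyMap (scMap φ r h)
  simp only [← ShortComplex.homologyMap_comp]
  congr 1
  ext <;> exact (show dhom φ ≫ 𝟙 Q.X ≫ 𝟙 Q.X = (𝟙 P.X ≫ 𝟙 P.X) ≫ dhom φ by simp)

lemma nat1 {P Q : DiffObj A n} (φ : P ⟶ Q) (r : ℕ) (h : r ≤ n) :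
    HomologicalComplex.homologyMap (cxMap φ r h) 1 ≫ (HrIso1 Q r h).hom =
      (HrIso1 P r h).hom ≫ Hmap φ (n - r) (Nat.sub_le n r) := by
  show ShortComplex.homologyMap ((HomologicalComplex.shortComplexFunctor A _ 1).map (cxMap φ r h)) ≫
      ShortComplex.homologyMap ((cx Q r h).isoSc' 0 1 2 (by simp) (by simp)).hom ≫
        ShortComplex.homologyMap (e1 Q r h).hom =
    (ShortComplex.homologyMap ((cx P r h).isoSc' 0 1 2 (by simp) (by simp)).hom ≫
        ShortComplex.homologyMap (e1 P r h).hom) ≫ ShortComplex.homologyMap (scMap φ (n - r) _)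
  simp only [← ShortComplex.homologyMap_comp]
  congr 1
  ext <;> exact (show dhom φ ≫ 𝟙 Q.X ≫ 𝟙 Q.X = (𝟙 P.X ≫ 𝟙 P.X) ≫ dhom φ by simp)

lemma exactAt_conj {P Q R P' Q' R' : A} (eP : P ≅ P') (eQ : Q ≅ Q') (eR : R ≅ R')
    {u : P ⟶ Q} {v : Q ⟶ R} {u' : P' ⟶ Q'} {v' : Q' ⟶ R'}
    (hu : u ≫ eQ.hom = eP.hom ≫ u') (hv : v ≫ eR.hom = eQ.hom ≫ v')
    (hw' : u' ≫ v' = 0) (he : (ShortComplex.mk u' v' hw').Exact) : ExactAt u v := by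
  have hu2 : u = eP.hom ≫ u' ≫ eQ.inv := by
    rw [← Category.assoc, ← hu]; simp
  have hv2 : v = eQ.hom ≫ v' ≫ eR.inv := by
    rw [← Category.assoc, ← hv]; simp
  have w : u ≫ v = 0 := by
    rw [hu2, hv2]
    simp [reassoc_of% hw']
  refine ⟨w, ?_⟩
  refine ShortComplex.exact_of_iso (Iso.symm ?_) he
  exact ShortComplex.isoMk eP eQ eR hu.symm hv.symm

end LES

/-- **Statement 18.** A short exact sequence `0 → X → Y → Z → 0` in `A[ε]^n` (i.e. a pair of
composable morphisms of `n`-th differential objects which is short exact in `A`) induces, for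
every `1 ≤ r ≤ n-1`, connecting morphisms `∂ : H_(r)(Z) → H_(n-r)(X)` making the doubly infinite
periodic sequence
`⋯ → H_(r)(X) → H_(r)(Y) → H_(r)(Z) → H_(n-r)(X) → H_(n-r)(Y) → H_(n-r)(Z) → H_(r)(X) → ⋯`
exact. -/
theorem statement18 (A : Type u) [Category.{v} A] [Abelian A] (n : ℕ) (hn : 2 ≤ n)
    {X Y Z : DiffObj A n} (f : X ⟶ Y) (g : Y ⟶ Z) (hw : dhom f ≫ dhom g = 0)
    (hse : (ShortComplex.mk (dhom f) (dhom g) hw).ShortExact) :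
    ∃ δ : ∀ (r : ℕ) (_h1 : 1 ≤ r) (_h2 : r ≤ n - 1), (Hr Z r (by omega) ⟶ Hr X (n - r) (by omega)),
      ∀ (r : ℕ) (h1 : 1 ≤ r) (h2 : r ≤ n - 1),
        -- exactness at `H_(r)(Y)`
        ExactAt (Hmap f r (by omega)) (Hmap g r (by omega)) ∧
        -- exactness at `H_(r)(Z)`
        ExactAt (Hmap g r (by omega)) (δ r h1 h2) ∧
        -- exactness at `H_(n-r)(X)`
        ExactAt (δ r h1 h2) (Hmap f (n - r) (by omega)) := by
  have hrel : (ComplexShape.up ℤ).Rel 0 1 := by simp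
  -- the short exact sequence of 2-periodic complexes, for each r
  let S : ∀ (r : ℕ) (_hr : r ≤ n), ShortComplex (HomologicalComplex A (ComplexShape.up ℤ)) :=
    fun r hr => ShortComplex.mk (cxMap f r hr) (cxMap g r hr)
      (by ext i; exact hw)
  have hS : ∀ (r : ℕ) (hr : r ≤ n), (S r hr).ShortExact := by
    intro r hr
    apply HomologicalComplex.shortExact_of_degreewise_shortExact
    intro i
    exact hse
  refine ⟨fun r h1 h2 =>
    (HrIso0 Z r (by omega)).inv ≫ (hS r (by omega)).δ 0 1 hrel ≫
      (HrIso1 X r (by omega)).hom, fun r h1 h2 => ?_⟩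
  have hr : r ≤ n := by omega
  refine ⟨?_, ?_, ?_⟩
  · exact exactAt_conj (HrIso0 X r hr).symm (HrIso0 Y r hr).symm (HrIso0 Z r hr).symm
      (by rw [← cancel_mono (HrIso0 Y r hr).hom]; simp [S, nat0 f r hr])
      (by rw [← cancel_mono (HrIso0 Z r hr).hom]; simp [S, nat0 g r hr])
      _ ((hS r hr).homology_exact₂ 0)
  · exact exactAt_conj (HrIso0 Y r hr).symm (HrIso0 Z r hr).symm (HrIso1 X r hr).symm
      (by rw [← cancel_mono (HrIso0 Z r hr).hom]; simp [S, nat0 g r hr])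
      (by simp)
      _ ((hS r hr).homology_exact₃ 0 1 hrel)
  · exact exactAt_conj (HrIso0 Z r hr).symm (HrIso1 X r hr).symm (HrIso1 Y r hr).symm
      (by simp)
      (by rw [← cancel_mono (HrIso1 Y r hr).hom]; simp [S, nat1 f r hr])
      _ ((hS r hr).homology_exact₁ 0 1 hrel)

end Paper
end
end
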